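/- arXiv:2102.03432 — 4 statements merged into one kernel-verified Lean document; each statement's English description precedes it below -/
import Mathlib

section
/- Let X be a set and k₁, k₂ : X × X → ℝ be kernels. Then their pointwise product (x, y) ↦ k₁(x, y) · k₂(x, y) is a kernel on X. -/
open Finset Matrix

/-- A kernel on a set `X`: a symmetric, positive semi-definite function `X × X → ℝ`. -/
def IsKernel {X : Type*} (k : X → X → ℝ) : Prop :=
  (∀ x y, k x y = k y x) ∧
  ∀ (n : ℕ) (x : Fin n → X) (c : Fin n → ℝ),
    0 ≤ ∑ i, ∑ j, c i * c j * k (x i) (x j)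

/-- A kernel restricted to finitely many points has a Gram representation. -/
lemma gram_rep {X : Type*} {k : X → X → ℝ} (hk : IsKernel k) (n : ℕ) (x : Fin n → X) :
    ∃ B : Matrix (Fin n) (Fin n) ℝ, ∀ i j, k (x i) (x j) = ∑ l, B l i * B l j := by
  have hps : Matrix.PosSemidef (Matrix.of fun i j => k (x i) (x j)) := by
    rw [Matrix.posSemidef_iff_dotProduct_mulVec]
    constructor
    · ext i j
      simp [Matrix.conjTranspose_apply, hk.1 (x i) (x j)]
    · intro v
      have h := hk.2 n x v
      have heq : dotProduct (star v) ((Matrix.of fun i j => k (x i) (x j)).mulVec v)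
          = ∑ i, ∑ j, v i * v j * k (x i) (x j) := by
        simp only [dotProduct, Matrix.mulVec, star_trivial, Matrix.of_apply,
          Finset.mul_sum]
        refine Finset.sum_congr rfl fun i _ => Finset.sum_congr rfl fun j _ => ?_
        ring
      rw [heq]; exact h
  open scoped MatrixOrder in
  obtain ⟨B, hB⟩ := CStarAlgebra.nonneg_iff_eq_star_mul_self.mp hps.nonneg
  refine ⟨B, fun i j => ?_⟩
  have := congrFun (congrFun hB i) j
  simpa [Matrix.mul_apply, Matrix.conjTranspose_apply, Matrix.star_eq_conjTranspose] using this

/-- The pointwise product of two kernels is a kernel. -/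
theorem kernel_mul {X : Type*} (k₁ k₂ : X → X → ℝ)
    (h₁ : IsKernel k₁) (h₂ : IsKernel k₂) :
    IsKernel (fun x y => k₁ x y * k₂ x y) := by
  constructor
  · intro x y
    simp [h₁.1 x y, h₂.1 x y]
  · intro n x c
    obtain ⟨B₁, hB₁⟩ := gram_rep h₁ n x
    obtain ⟨B₂, hB₂⟩ := gram_rep h₂ n x
    have key : ∀ i j, c i * c j * (k₁ (x i) (x j) * k₂ (x i) (x j))
        = ∑ p : Fin n × Fin n,
            (c i * B₁ p.1 i * B₂ p.2 i) * (c j * B₁ p.1 j * B₂ p.2 j) := by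
      intro i j
      rw [hB₁, hB₂, Fintype.sum_prod_type, Finset.sum_mul_sum, Finset.mul_sum]
      refine Finset.sum_congr rfl fun l _ => ?_
      rw [Finset.mul_sum]
      refine Finset.sum_congr rfl fun m _ => ?_
      ring
    have e : ∑ i, ∑ j, c i * c j * (k₁ (x i) (x j) * k₂ (x i) (x j))
        = ∑ p : Fin n × Fin n, (∑ i, c i * B₁ p.1 i * B₂ p.2 i) ^ 2 := calc
      ∑ i, ∑ j, c i * c j * (k₁ (x i) (x j) * k₂ (x i) (x j))
        = ∑ i, ∑ j, ∑ p : Fin n × Fin n,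
            (c i * B₁ p.1 i * B₂ p.2 i) * (c j * B₁ p.1 j * B₂ p.2 j) := by
          simp_rw [key]
      _ = ∑ p : Fin n × Fin n, ∑ i, ∑ j,
            (c i * B₁ p.1 i * B₂ p.2 i) * (c j * B₁ p.1 j * B₂ p.2 j) := by
          exact Eq.trans (Finset.sum_congr rfl fun i _ => Finset.sum_comm)
            Finset.sum_comm
      _ = ∑ p : Fin n × Fin n, (∑ i, c i * B₁ p.1 i * B₂ p.2 i) ^ 2 := by
          refine Finset.sum_congr rfl fun p _ => ?_
          rw [sq, Finset.sum_mul_sum]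
    rw [e]
    exact Finset.sum_nonneg fun p _ => sq_nonneg _
end

section
/- For every dimension n ≥ 1, every signal variance σ_s² > 0 and every length scale l > 0, the exponential kernel k(x, y) = σ_s² · exp(−‖x − y‖ / l) on ℝⁿ, where ‖·‖ is the Euclidean norm, is a kernel: it is symmetric and positive semi-definite. -/
open Finset

/-- PSD kernel in summation form. -/
def PSDk {N : ℕ} (M : Fin N → Fin N → ℝ) : Prop :=
  ∀ c : Fin N → ℝ, 0 ≤ ∑ i, ∑ j, c i * c j * M i j

lemma psdk_of_posSemidef {N : ℕ} {M : Fin N → Fin N → ℝ}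
    (hsym : ∀ i j, M i j = M j i) (h : PSDk M) :
    (Matrix.of M).PosSemidef := by
  rw [Matrix.posSemidef_iff_dotProduct_mulVec]
  constructor
  · ext i j; simpa [Matrix.conjTranspose] using (hsym j i)
  · intro c
    have := h c
    simp only [dotProduct, Matrix.mulVec, dotProduct, Pi.star_apply,
      star_trivial, Matrix.of_apply]
    calc (0:ℝ) ≤ ∑ i, ∑ j, c i * c j * M i j := this
    _ = ∑ i, c i * ∑ j, M i j * c j := by
        simp_rw [mul_sum]; exact Finset.sum_congr rfl fun i _ => Finset.sum_congr rfl fun j _ => by ring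

/-- Schur product theorem, kernel form. -/
lemma PSDk.schur {N : ℕ} {A M : Fin N → Fin N → ℝ}
    (hsym : ∀ i j, A i j = A j i) (hA : PSDk A) (hM : PSDk M) :
    PSDk (fun i j => A i j * M i j) := by
  obtain ⟨_, B, hB⟩ : ∃ (m : ℕ) (B : Matrix (Fin m) (Fin N) ℝ), Matrix.of A = B.conjTranspose * B := by
    obtain ⟨m, v, hv⟩ := Matrix.posSemidef_iff_eq_sum_vecMulVec.mp (psdk_of_posSemidef hsym hA)
    refine ⟨m, Matrix.of fun k i => v k i, ?_⟩
    rw [hv]; ext i j; simp [Matrix.mul_apply, Matrix.vecMulVec_apply, Matrix.sum_apply]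
  have hAij : ∀ i j, A i j = ∑ k, B k i * B k j := by
    intro i j
    have := congrFun (congrFun hB i) j
    simpa [Matrix.mul_apply, Matrix.conjTranspose_apply] using this
  intro c
  have step : ∀ i j : Fin N, c i * c j * (A i j * M i j)
      = ∑ k, (c i * B k i) * (c j * B k j) * M i j := by
    intro i j
    rw [hAij i j]
    simp only [Finset.sum_mul, Finset.mul_sum]
    exact Finset.sum_congr rfl fun k _ => by ring
  have : ∑ i, ∑ j, c i * c j * (A i j * M i j)
      = ∑ k, ∑ i, ∑ j, (c i * B k i) * (c j * B k j) * M i j := by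
    simp_rw [step]
    rw [show (∑ i, ∑ j, ∑ k, (c i * B k i) * (c j * B k j) * M i j)
        = ∑ i, ∑ k, ∑ j, (c i * B k i) * (c j * B k j) * M i j from
      Finset.sum_congr rfl fun i _ => Finset.sum_comm, Finset.sum_comm]
  rw [this]
  exact Finset.sum_nonneg fun k _ => hM _

lemma PSDk.pow {N : ℕ} {A : Fin N → Fin N → ℝ}
    (hsym : ∀ i j, A i j = A j i) (hA : PSDk A) (m : ℕ) :
    PSDk (fun i j => A i j ^ m) := by
  induction m with
  | zero =>
      intro c
      simpa [← Finset.sum_mul, ← Finset.mul_sum] using mul_self_nonneg (∑ i, c i)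
  | succ m ih =>
      have := PSDk.schur hsym hA ih
      intro c
      simpa [pow_succ, mul_comm, mul_left_comm, mul_assoc] using this c

lemma real_exp_tsum (t : ℝ) : Real.exp t = ∑' m : ℕ, t ^ m / (Nat.factorial m : ℝ) := by
  rw [Real.exp_eq_exp_ℝ, NormedSpace.exp_eq_tsum_div]

/-- Multiplying a PSD kernel entrywise by `f i * f j` preserves PSD. -/
lemma PSDk.scale {N : ℕ} {M : Fin N → Fin N → ℝ} (hM : PSDk M) (f : Fin N → ℝ) :
    PSDk (fun i j => f i * f j * M i j) := by
  intro c
  have := hM (fun i => c i * f i)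
  calc (0:ℝ) ≤ ∑ i, ∑ j, (c i * f i) * (c j * f j) * M i j := this
  _ = ∑ i, ∑ j, c i * c j * (f i * f j * M i j) :=
      Finset.sum_congr rfl fun i _ => Finset.sum_congr rfl fun j _ => by ring

/-- exp of a symmetric PSD kernel is PSD. -/
lemma PSDk.exp {N : ℕ} {A : Fin N → Fin N → ℝ}
    (hsym : ∀ i j, A i j = A j i) (hA : PSDk A) :
    PSDk (fun i j => Real.exp (A i j)) := by
  intro c
  have hs1 : ∀ i j : Fin N,
      Summable (fun m : ℕ => c i * c j * (A i j ^ m / (Nat.factorial m : ℝ))) :=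
    fun i j => (Real.summable_pow_div_factorial (A i j)).mul_left _
  have hs2 : ∀ i : Fin N,
      Summable (fun m : ℕ => ∑ j, c i * c j * (A i j ^ m / (Nat.factorial m : ℝ))) :=
    fun i => summable_sum (fun j _ => hs1 i j)
  have key : ∑ i, ∑ j, c i * c j * Real.exp (A i j)
      = ∑' m : ℕ, ∑ i, ∑ j, c i * c j * (A i j ^ m / (Nat.factorial m : ℝ)) := by
    have e1 : ∀ i j : Fin N, c i * c j * Real.exp (A i j)
        = ∑' m : ℕ, c i * c j * (A i j ^ m / (Nat.factorial m : ℝ)) := by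
      intro i j
      rw [real_exp_tsum, tsum_mul_left]
    simp_rw [e1]
    calc ∑ i, ∑ j, ∑' m : ℕ, c i * c j * (A i j ^ m / (Nat.factorial m : ℝ))
        = ∑ i, ∑' m : ℕ, ∑ j, c i * c j * (A i j ^ m / (Nat.factorial m : ℝ)) :=
          Finset.sum_congr rfl fun i _ => (Summable.tsum_finsetSum (fun j _ => hs1 i j)).symm
      _ = ∑' m : ℕ, ∑ i, ∑ j, c i * c j * (A i j ^ m / (Nat.factorial m : ℝ)) :=
          (Summable.tsum_finsetSum (fun i _ => hs2 i)).symm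
  rw [key]
  refine tsum_nonneg fun m => ?_
  have := (hA.pow hsym m) c
  have e2 : ∑ i, ∑ j, c i * c j * (A i j ^ m / (Nat.factorial m : ℝ))
      = (∑ i, ∑ j, c i * c j * A i j ^ m) / (Nat.factorial m : ℝ) := by
    rw [Finset.sum_div]
    exact Finset.sum_congr rfl fun i _ => by rw [Finset.sum_div]; exact Finset.sum_congr rfl fun j _ => by ring
  rw [e2]
  exact div_nonneg this (Nat.cast_nonneg _)

/-- Gram kernels are PSD. -/
lemma psdk_gram {N : ℕ} {E : Type*} [NormedAddCommGroup E] [InnerProductSpace ℝ E]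
    (x : Fin N → E) : PSDk (fun i j => (inner ℝ (x i) (x j) : ℝ)) := by
  intro c
  have : ∑ i, ∑ j, c i * c j * (inner ℝ (x i) (x j) : ℝ)
      = (inner ℝ (∑ i, c i • x i) (∑ j, c j • x j) : ℝ) := by
    rw [sum_inner]
    refine Finset.sum_congr rfl fun i _ => ?_
    rw [inner_sum]
    refine Finset.sum_congr rfl fun j _ => ?_
    rw [real_inner_smul_left, real_inner_smul_right]; ring
  rw [this]
  exact real_inner_self_nonneg

lemma psdk_const_mul {N : ℕ} {M : Fin N → Fin N → ℝ} (hM : PSDk M) {a : ℝ} (ha : 0 ≤ a) :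
    PSDk (fun i j => a * M i j) := by
  intro c
  have : ∑ i, ∑ j, c i * c j * (a * M i j) = a * ∑ i, ∑ j, c i * c j * M i j := by
    rw [Finset.mul_sum]
    refine Finset.sum_congr rfl fun i _ => ?_
    rw [Finset.mul_sum]
    exact Finset.sum_congr rfl fun j _ => by ring
  rw [this]
  exact mul_nonneg ha (hM c)

/-- Gaussian kernels are PSD. -/
lemma psdk_gauss {N : ℕ} {E : Type*} [NormedAddCommGroup E] [InnerProductSpace ℝ E]
    (x : Fin N → E) {s : ℝ} (hs : 0 ≤ s) :
    PSDk (fun i j => Real.exp (-(s * ‖x i - x j‖ ^ 2))) := by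
  have hinner : PSDk (fun i j => (2 * s) * (inner ℝ (x i) (x j) : ℝ)) :=
    psdk_const_mul (psdk_gram x) (by linarith)
  have hsym : ∀ i j : Fin N, (2 * s) * (inner ℝ (x i) (x j) : ℝ) = (2 * s) * (inner ℝ (x j) (x i) : ℝ) := by
    intro i j; rw [real_inner_comm]
  have hexp := (PSDk.exp hsym hinner).scale (fun i => Real.exp (-(s * ‖x i‖ ^ 2)))
  intro c
  have e : ∀ i j : Fin N, Real.exp (-(s * ‖x i - x j‖ ^ 2))
      = Real.exp (-(s * ‖x i‖ ^ 2)) * Real.exp (-(s * ‖x j‖ ^ 2)) *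
        Real.exp ((2 * s) * (inner ℝ (x i) (x j) : ℝ)) := by
    intro i j
    rw [← Real.exp_add, ← Real.exp_add]
    congr 1
    rw [@norm_sub_sq_real E]
    ring
  simp_rw [e]
  exact hexp c

open MeasureTheory in
lemma g_contOn : ContinuousOn (fun u : ℝ => (1 - Real.exp (-u)) * u ^ (-(3:ℝ)/2))
    (Set.Ioi 0) := by
  intro u hu
  exact ((continuous_const.sub (Real.continuous_exp.comp continuous_neg)).continuousAt.continuousWithinAt).mul
    ((Real.continuousAt_rpow_const u _ (Or.inl (ne_of_gt hu))).continuousWithinAt)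

open MeasureTheory Set in
lemma g_integrable :
    IntegrableOn (fun u : ℝ => (1 - Real.exp (-u)) * u ^ (-(3:ℝ)/2)) (Ioi 0) := by
  have h1 : IntegrableOn (fun u : ℝ => (1 - Real.exp (-u)) * u ^ (-(3:ℝ)/2)) (Ioc 0 1) := by
    have hint : IntegrableOn (fun u : ℝ => u ^ (-(1:ℝ)/2)) (Ioc 0 1) := by
      have := intervalIntegral.intervalIntegrable_rpow' (a := 0) (b := 1)
        (r := -(1:ℝ)/2) (by norm_num)
      rwa [intervalIntegrable_iff, uIoc_of_le (by norm_num : (0:ℝ) ≤ 1)] at this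
    refine MeasureTheory.Integrable.mono hint
      ((g_contOn.mono (Set.Ioc_subset_Ioi_self)).aestronglyMeasurable measurableSet_Ioc) ?_
    rw [ae_restrict_iff' measurableSet_Ioc]
    filter_upwards with u hu
    have hu0 : 0 < u := hu.1
    have h1e : 0 ≤ 1 - Real.exp (-u) := by
      have : Real.exp (-u) ≤ 1 := Real.exp_le_one_iff.mpr (by linarith)
      linarith
    have h2e : 1 - Real.exp (-u) ≤ u := by
      have := Real.add_one_le_exp (-u)
      nlinarith [Real.exp_pos (-u)]
    rw [Real.norm_eq_abs, Real.norm_eq_abs, abs_of_nonneg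
      (mul_nonneg h1e (Real.rpow_nonneg hu0.le _)),
      abs_of_nonneg (Real.rpow_nonneg hu0.le _)]
    calc (1 - Real.exp (-u)) * u ^ (-(3:ℝ)/2) ≤ u * u ^ (-(3:ℝ)/2) :=
          mul_le_mul_of_nonneg_right h2e (Real.rpow_nonneg hu0.le _)
      _ = u ^ (-(1:ℝ)/2) := by
          rw [← Real.rpow_one_add' hu0.le (by norm_num)]; norm_num
  have h2 : IntegrableOn (fun u : ℝ => (1 - Real.exp (-u)) * u ^ (-(3:ℝ)/2)) (Ioi 1) := by
    have hint : IntegrableOn (fun u : ℝ => u ^ (-(3:ℝ)/2)) (Ioi 1) :=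
      integrableOn_Ioi_rpow_of_lt (by norm_num) one_pos
    refine MeasureTheory.Integrable.mono hint
      ((g_contOn.mono (Set.Ioi_subset_Ioi one_pos.le)).aestronglyMeasurable measurableSet_Ioi) ?_
    rw [ae_restrict_iff' measurableSet_Ioi]
    filter_upwards with u hu
    have hu0 : (0:ℝ) < u := lt_trans one_pos hu
    have h1e : 0 ≤ 1 - Real.exp (-u) := by
      have : Real.exp (-u) ≤ 1 := Real.exp_le_one_iff.mpr (by linarith)
      linarith
    have h2e : 1 - Real.exp (-u) ≤ 1 := by nlinarith [Real.exp_pos (-u)]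
    rw [Real.norm_eq_abs, Real.norm_eq_abs, abs_of_nonneg
      (mul_nonneg h1e (Real.rpow_nonneg hu0.le _)),
      abs_of_nonneg (Real.rpow_nonneg hu0.le _)]
    nlinarith [Real.rpow_nonneg hu0.le (-(3:ℝ)/2)]
  have : Set.Ioi (0:ℝ) = Set.Ioc 0 1 ∪ Set.Ioi 1 :=
    (Set.Ioc_union_Ioi_eq_Ioi (by norm_num)).symm
  rw [this]
  exact h1.union h2

open MeasureTheory in
lemma g_nonneg_ae : (0:ℝ → ℝ) ≤ᵐ[volume.restrict (Set.Ioi (0:ℝ))]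
    (fun u : ℝ => (1 - Real.exp (-u)) * u ^ (-(3:ℝ)/2)) := by
  rw [Filter.EventuallyLE, MeasureTheory.ae_restrict_iff' measurableSet_Ioi]
  filter_upwards with u hu
  have hu0 : (0:ℝ) < u := hu
  have : Real.exp (-u) ≤ 1 := Real.exp_le_one_iff.mpr (by linarith)
  exact mul_nonneg (by linarith) (Real.rpow_nonneg hu0.le _)

open MeasureTheory in
lemma g_int_pos : 0 < ∫ u in Set.Ioi (0:ℝ), (1 - Real.exp (-u)) * u ^ (-(3:ℝ)/2) := by
  rw [MeasureTheory.integral_pos_iff_support_of_nonneg_ae g_nonneg_ae g_integrable]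
  have hsub : Set.Ioi (0:ℝ) ⊆ Function.support
      (fun u : ℝ => (1 - Real.exp (-u)) * u ^ (-(3:ℝ)/2)) := by
    intro u hu
    have hu0 : (0:ℝ) < u := hu
    have h1 : Real.exp (-u) < 1 := Real.exp_lt_one_iff.mpr (by linarith)
    have h2 : (0:ℝ) < u ^ (-(3:ℝ)/2) := Real.rpow_pos_of_pos hu0 _
    exact ne_of_gt (mul_pos (by linarith) h2)
  have : (volume.restrict (Set.Ioi (0:ℝ))) (Function.support
      (fun u : ℝ => (1 - Real.exp (-u)) * u ^ (-(3:ℝ)/2)))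
      = ⊤ := by
    refine top_le_iff.mp ?_
    calc (⊤:ENNReal) = volume (Set.Ioi (0:ℝ)) := Real.volume_Ioi.symm
    _ = (volume.restrict (Set.Ioi (0:ℝ))) (Set.Ioi (0:ℝ)) := by
        rw [MeasureTheory.Measure.restrict_apply measurableSet_Ioi, Set.inter_self]
    _ ≤ _ := MeasureTheory.measure_mono hsub
  rw [this]
  exact ENNReal.zero_lt_top

open MeasureTheory in
lemma scaled_eq {a : ℝ} (ha : 0 < a) :
    Set.EqOn (fun s : ℝ => (1 - Real.exp (-(a * s))) * s ^ (-(3:ℝ)/2))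
      (fun s : ℝ => a ^ ((3:ℝ)/2) * ((1 - Real.exp (-(a * s))) * (a * s) ^ (-(3:ℝ)/2)))
      (Set.Ioi 0) := by
  intro s hs
  have hs0 : (0:ℝ) < s := hs
  simp only
  rw [Real.mul_rpow ha.le hs0.le]
  rw [show a ^ ((3:ℝ)/2) * ((1 - Real.exp (-(a * s))) * (a ^ (-(3:ℝ)/2) * s ^ (-(3:ℝ)/2)))
      = (a ^ ((3:ℝ)/2) * a ^ (-(3:ℝ)/2)) * ((1 - Real.exp (-(a * s))) * s ^ (-(3:ℝ)/2)) by ring]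
  rw [← Real.rpow_add ha]
  norm_num

open MeasureTheory in
lemma scaled_integrable {a : ℝ} (ha : 0 < a) :
    IntegrableOn (fun s : ℝ => (1 - Real.exp (-(a * s))) * s ^ (-(3:ℝ)/2)) (Set.Ioi 0) := by
  have h1 : IntegrableOn (fun s : ℝ => (1 - Real.exp (-(a * s))) * (a * s) ^ (-(3:ℝ)/2))
      (Set.Ioi 0) := by
    have := (integrableOn_Ioi_comp_mul_left_iff
      (fun u : ℝ => (1 - Real.exp (-u)) * u ^ (-(3:ℝ)/2)) 0 ha).mpr
    rw [mul_zero] at this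
    exact this g_integrable
  exact (IntegrableOn.congr_fun (h1.const_mul (a ^ ((3:ℝ)/2)))
    (fun s hs => (scaled_eq ha hs).symm) measurableSet_Ioi)

open MeasureTheory in
lemma scaled_integral {a : ℝ} (ha : 0 < a) :
    ∫ s in Set.Ioi (0:ℝ), (1 - Real.exp (-(a * s))) * s ^ (-(3:ℝ)/2)
      = Real.sqrt a * ∫ u in Set.Ioi (0:ℝ), (1 - Real.exp (-u)) * u ^ (-(3:ℝ)/2) := by
  rw [setIntegral_congr_fun measurableSet_Ioi (scaled_eq ha)]
  rw [integral_const_mul]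
  have h2 : (∫ s in Set.Ioi (0:ℝ), (1 - Real.exp (-(a * s))) * (a * s) ^ (-(3:ℝ)/2))
      = a⁻¹ * ∫ u in Set.Ioi (0:ℝ), (1 - Real.exp (-u)) * u ^ (-(3:ℝ)/2) := by
    have := integral_comp_mul_left_Ioi
      (fun u : ℝ => (1 - Real.exp (-u)) * u ^ (-(3:ℝ)/2)) 0 ha
    rw [mul_zero] at this
    simpa [smul_eq_mul] using this
  rw [h2, ← mul_assoc]
  congr 1
  rw [show (a:ℝ)⁻¹ = a ^ (-(1:ℝ)) by rw [Real.rpow_neg_one], ← Real.rpow_add ha,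
    Real.sqrt_eq_rpow]
  norm_num

open MeasureTheory in
lemma dist_integrable (d : ℝ) :
    IntegrableOn (fun s : ℝ => (1 - Real.exp (-(d^2 * s))) * s ^ (-(3:ℝ)/2))
      (Set.Ioi 0) := by
  rcases eq_or_lt_of_le (sq_nonneg d) with h | h
  · have : (fun s : ℝ => (1 - Real.exp (-(d^2 * s))) * s ^ (-(3:ℝ)/2))
        = fun _ => (0:ℝ) := by
      funext s; rw [← h]; simp
    rw [this]; exact integrable_zero _ _ _
  · exact scaled_integrable h

open MeasureTheory in
lemma dist_repr {d : ℝ} (hd : 0 ≤ d) :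
    d * (∫ u in Set.Ioi (0:ℝ), (1 - Real.exp (-u)) * u ^ (-(3:ℝ)/2))
      = ∫ s in Set.Ioi (0:ℝ), (1 - Real.exp (-(d^2 * s))) * s ^ (-(3:ℝ)/2) := by
  rcases eq_or_lt_of_le hd with h | h
  · rw [← h]
    have : (fun s : ℝ => (1 - Real.exp (-((0:ℝ)^2 * s))) * s ^ (-(3:ℝ)/2))
        = fun _ => (0:ℝ) := by funext s; simp
    rw [this]; simp
  · rw [scaled_integral (pow_pos h 2), Real.sqrt_sq hd]

lemma gauss_quad {N : ℕ} {E : Type*} [NormedAddCommGroup E] [InnerProductSpace ℝ E]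
    (x : Fin N → E) (x0 : E) (c : Fin N → ℝ) {s : ℝ} (hs : 0 ≤ s) :
    0 ≤ ∑ i, ∑ j, c i * c j *
      ((1 - Real.exp (-(‖x i - x0‖^2 * s))) + (1 - Real.exp (-(‖x j - x0‖^2 * s)))
        - (1 - Real.exp (-(‖x i - x j‖^2 * s)))) := by
  have hg := psdk_gauss (Fin.cons x0 x : Fin (N+1) → E) hs
    (Fin.cons (-(∑ i, c i)) c)
  set S := ∑ i, c i with hS
  set A : Fin N → ℝ := fun i => Real.exp (-(‖x i - x0‖^2 * s)) with hA
  set C : Fin N → Fin N → ℝ := fun i j => Real.exp (-(‖x i - x j‖^2 * s)) with hC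
  have hgexp : ∑ p : Fin (N+1), ∑ q : Fin (N+1),
      (Fin.cons (-S) c : Fin (N+1) → ℝ) p * (Fin.cons (-S) c : Fin (N+1) → ℝ) q *
        Real.exp (-(s * ‖(Fin.cons x0 x : Fin (N+1) → E) p -
          (Fin.cons x0 x : Fin (N+1) → E) q‖^2))
      = S * S - S * (∑ j, c j * A j) - (∑ i, c i * A i) * S
        + ∑ i, ∑ j, c i * c j * C i j := by
    rw [Fin.sum_univ_succ]
    rw [Fin.sum_univ_succ]
    simp only [Fin.cons_zero, Fin.cons_succ, sub_self, norm_zero]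
    have e0 : Real.exp (-(s * (0:ℝ)^2)) = 1 := by norm_num
    rw [e0]
    have eA : ∀ j : Fin N, Real.exp (-(s * ‖x0 - x j‖^2)) = A j := by
      intro j; rw [hA, norm_sub_rev, mul_comm]
    have eA' : ∀ i : Fin N, Real.exp (-(s * ‖x i - x0‖^2)) = A i := by
      intro i; rw [hA, mul_comm]
    have eC : ∀ i j : Fin N, Real.exp (-(s * ‖x i - x j‖^2)) = C i j := by
      intro i j; rw [hC, mul_comm]
    simp only [eA, eA', eC]
    -- expand remaining inner sums over Fin (N+1)
    simp only [Fin.sum_univ_succ, Fin.cons_zero, Fin.cons_succ, eA, eA', eC]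
    rw [Finset.sum_add_distrib]
    have r1 : ∑ i, -S * c i * A i = -(S * ∑ j, c j * A j) := by
      rw [show ∑ i, -S * c i * A i = ∑ i, -S * (c i * A i) from
        Finset.sum_congr rfl fun i _ => by ring, ← Finset.mul_sum]
      ring
    have r2 : ∑ i, c i * -S * A i = -((∑ i, c i * A i) * S) := by
      rw [show ∑ i, c i * -S * A i = ∑ i, -S * (c i * A i) from
        Finset.sum_congr rfl fun i _ => by ring, ← Finset.mul_sum]
      ring
    rw [r1, r2]
    ring
  -- now rewrite the goal to match hgexp
  rw [hgexp] at hg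
  have target : ∑ i, ∑ j, c i * c j *
      ((1 - A i) + (1 - A j) - (1 - C i j))
      = S * S - S * (∑ j, c j * A j) - (∑ i, c i * A i) * S
        + ∑ i, ∑ j, c i * c j * C i j := by
    have per : ∀ i : Fin N, ∑ j, c i * c j * ((1 - A i) + (1 - A j) - (1 - C i j))
        = c i * S - c i * A i * S - c i * (∑ j, c j * A j) + ∑ j, c i * c j * C i j := by
      intro i
      have expand : ∀ j : Fin N, c i * c j * ((1 - A i) + (1 - A j) - (1 - C i j))
          = c i * c j - (c i * A i) * c j - c i * (c j * A j) + c i * c j * C i j := by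
        intro j; ring
      rw [Finset.sum_congr rfl fun j _ => expand j]
      rw [Finset.sum_add_distrib, Finset.sum_sub_distrib, Finset.sum_sub_distrib,
        ← Finset.mul_sum, ← Finset.mul_sum, ← Finset.mul_sum, ← hS]
    rw [Finset.sum_congr rfl fun i _ => per i]
    rw [Finset.sum_add_distrib, Finset.sum_sub_distrib, Finset.sum_sub_distrib,
      ← Finset.sum_mul, ← Finset.sum_mul, ← Finset.sum_mul, ← hS]
    ring
  rw [target]
  exact hg

noncomputable def fInt (a : ℝ) : ℝ → ℝ :=
  fun s => (1 - Real.exp (-(a * s))) * s ^ (-(3:ℝ)/2)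

open MeasureTheory in
lemma fInt_integrable (d : ℝ) : IntegrableOn (fInt (d^2)) (Set.Ioi 0) :=
  dist_integrable d

open MeasureTheory in
lemma fInt_repr {d : ℝ} (hd : 0 ≤ d) :
    d * (∫ u in Set.Ioi (0:ℝ), (1 - Real.exp (-u)) * u ^ (-(3:ℝ)/2))
      = ∫ s in Set.Ioi (0:ℝ), fInt (d^2) s :=
  dist_repr hd

open MeasureTheory in
lemma psdk_dist {N : ℕ} {E : Type*} [NormedAddCommGroup E] [InnerProductSpace ℝ E]
    (x : Fin N → E) (x0 : E) :
    PSDk (fun i j => ‖x i - x0‖ + ‖x j - x0‖ - ‖x i - x j‖) := by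
  intro c
  set I := ∫ u in Set.Ioi (0:ℝ), (1 - Real.exp (-u)) * u ^ (-(3:ℝ)/2) with hIdef
  have hI : 0 < I := g_int_pos
  set F : Fin N → Fin N → ℝ → ℝ := fun i j s =>
    c i * c j * (fInt (‖x i - x0‖^2) s + fInt (‖x j - x0‖^2) s
      - fInt (‖x i - x j‖^2) s) with hF
  have Fint : ∀ i j : Fin N, IntegrableOn (F i j) (Set.Ioi 0) := fun i j =>
    (((fInt_integrable ‖x i - x0‖).add (fInt_integrable ‖x j - x0‖)).sub
      (fInt_integrable ‖x i - x j‖)).const_mul _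
  have pair : ∀ i j : Fin N,
      c i * c j * (‖x i - x0‖ + ‖x j - x0‖ - ‖x i - x j‖) * I
        = ∫ s in Set.Ioi (0:ℝ), F i j s := by
    intro i j
    have e1 := fInt_repr (norm_nonneg (x i - x0))
    have e2 := fInt_repr (norm_nonneg (x j - x0))
    have e3 := fInt_repr (norm_nonneg (x i - x j))
    rw [hF]
    simp only
    rw [MeasureTheory.integral_const_mul]
    have hadd : IntegrableOn (fun s => fInt (‖x i - x0‖^2) s + fInt (‖x j - x0‖^2) s)
        (Set.Ioi 0) := (fInt_integrable _).add (fInt_integrable _)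
    have h3 : IntegrableOn (fun s => fInt (‖x i - x j‖^2) s) (Set.Ioi 0) :=
      fInt_integrable _
    have h1 : IntegrableOn (fun s => fInt (‖x i - x0‖^2) s) (Set.Ioi 0) :=
      fInt_integrable _
    have h2 : IntegrableOn (fun s => fInt (‖x j - x0‖^2) s) (Set.Ioi 0) :=
      fInt_integrable _
    rw [integral_sub hadd h3, integral_add h1 h2]
    rw [← e1, ← e2, ← e3, ← hIdef]
    ring
  have key : (∑ i, ∑ j, c i * c j * (‖x i - x0‖ + ‖x j - x0‖ - ‖x i - x j‖)) * I
      = ∫ s in Set.Ioi (0:ℝ), ∑ i, ∑ j, F i j s := by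
    rw [Finset.sum_mul]
    rw [integral_finset_sum _ (fun i _ => integrable_finset_sum _ (fun j _ => Fint i j))]
    refine Finset.sum_congr rfl fun i _ => ?_
    rw [Finset.sum_mul, integral_finset_sum _ (fun j _ => Fint i j)]
    exact Finset.sum_congr rfl fun j _ => pair i j
  have intnonneg : 0 ≤ ∫ s in Set.Ioi (0:ℝ), ∑ i, ∑ j, F i j s := by
    refine setIntegral_nonneg measurableSet_Ioi fun s hs => ?_
    have hs0 : (0:ℝ) < s := hs
    have hq := gauss_quad x x0 c hs0.le
    have e : ∑ i, ∑ j, F i j s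
        = (∑ i, ∑ j, c i * c j *
          ((1 - Real.exp (-(‖x i - x0‖^2 * s))) + (1 - Real.exp (-(‖x j - x0‖^2 * s)))
            - (1 - Real.exp (-(‖x i - x j‖^2 * s))))) * s ^ (-(3:ℝ)/2) := by
      rw [Finset.sum_mul]
      refine Finset.sum_congr rfl fun i _ => ?_
      rw [Finset.sum_mul]
      refine Finset.sum_congr rfl fun j _ => ?_
      rw [hF]; simp only [fInt]; ring
    rw [e]
    exact mul_nonneg hq (Real.rpow_nonneg hs0.le _)
  rw [← key] at intnonneg
  by_contra hneg
  push_neg at hneg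
  nlinarith [mul_pos (neg_pos.mpr hneg) hI]

/-- The exponential kernel `k x y = σ² exp (−‖x − y‖ / l)` on `ℝⁿ`
is a kernel for every signal variance `σ² > 0` and length scale `l > 0`. -/
theorem exponential_isKernel (n : ℕ) (hn : 1 ≤ n) (σ2 l : ℝ)
    (hσ : 0 < σ2) (hl : 0 < l) :
    IsKernel (fun x y : EuclideanSpace ℝ (Fin n) =>
      σ2 * Real.exp (-‖x - y‖ / l)) := by
  constructor
  · intro a b
    simp only [norm_sub_rev a b]
  · intro N x c
    cases N with
    | zero => simp
    | succ N =>
      set x0 := x 0 with hx0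
      have hK : PSDk (fun i j : Fin (N+1) =>
          l⁻¹ * (‖x i - x0‖ + ‖x j - x0‖ - ‖x i - x j‖)) :=
        psdk_const_mul (psdk_dist x x0) (inv_nonneg.mpr hl.le)
      have hKsym : ∀ i j : Fin (N+1),
          l⁻¹ * (‖x i - x0‖ + ‖x j - x0‖ - ‖x i - x j‖)
            = l⁻¹ * (‖x j - x0‖ + ‖x i - x0‖ - ‖x j - x i‖) := by
        intro i j; rw [norm_sub_rev (x i) (x j)]; ring
      have hE := (PSDk.exp hKsym hK).scale (fun i => Real.exp (-(l⁻¹ * ‖x i - x0‖)))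
      have hfinal : PSDk (fun i j : Fin (N+1) => σ2 * Real.exp (-‖x i - x j‖ / l)) := by
        have hs2 := psdk_const_mul hE hσ.le
        intro c'
        have e : ∀ i j : Fin (N+1), σ2 * Real.exp (-‖x i - x j‖ / l)
            = σ2 * (Real.exp (-(l⁻¹ * ‖x i - x0‖)) * Real.exp (-(l⁻¹ * ‖x j - x0‖)) *
              Real.exp (l⁻¹ * (‖x i - x0‖ + ‖x j - x0‖ - ‖x i - x j‖))) := by
          intro i j
          rw [← Real.exp_add, ← Real.exp_add]
          congr 1
          field_simp
          ring
        simp_rw [e]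
        exact hs2 c'
      exact hfinal c
end

section
/- Let M be a symmetric positive definite n × n real matrix and l > 0. Then the anisotropic squared exponential kernel k(x, y) = exp(−(x − y)ᵀ M (x − y) / l) on ℝⁿ is a kernel: it is symmetric and positive semi-definite. -/
open Finset Matrix

/-- Powers of the dot-product kernel are positive semi-definite. -/
lemma dotProduct_pow_psd {n N m : ℕ} (u : Fin N → Fin n → ℝ) (c : Fin N → ℝ) :
    0 ≤ ∑ i, ∑ j, c i * c j * (u i ⬝ᵥ u j) ^ m := by
  have key : ∀ i j : Fin N, (u i ⬝ᵥ u j) ^ m =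
      ∑ f : Fin m → Fin n, (∏ s, u i (f s)) * (∏ s, u j (f s)) := by
    intro i j
    have h1 : (u i ⬝ᵥ u j) ^ m = ∏ _s : Fin m, ∑ t, u i t * u j t := by
      simp [dotProduct, Finset.prod_const]
    rw [h1, Finset.prod_univ_sum]
    refine Finset.sum_congr rfl fun f _ => ?_
    rw [← Finset.prod_mul_distrib]
  calc ∑ i, ∑ j, c i * c j * (u i ⬝ᵥ u j) ^ m
      = ∑ i, ∑ j, ∑ f : Fin m → Fin n,
          (c i * ∏ s, u i (f s)) * (c j * ∏ s, u j (f s)) := by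
        simp only [key, Finset.mul_sum]
        exact Finset.sum_congr rfl fun i _ => Finset.sum_congr rfl fun j _ =>
          Finset.sum_congr rfl fun f _ => by ring
    _ = ∑ i, ∑ f : Fin m → Fin n, ∑ j,
          (c i * ∏ s, u i (f s)) * (c j * ∏ s, u j (f s)) :=
        Finset.sum_congr rfl fun i _ => Finset.sum_comm
    _ = ∑ f : Fin m → Fin n, ∑ i, ∑ j,
          (c i * ∏ s, u i (f s)) * (c j * ∏ s, u j (f s)) := Finset.sum_comm
    _ = ∑ f : Fin m → Fin n,
          (∑ i, c i * ∏ s, u i (f s)) * (∑ j, c j * ∏ s, u j (f s)) := by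
        refine Finset.sum_congr rfl fun f _ => ?_
        rw [Finset.sum_mul_sum]
    _ ≥ 0 := Finset.sum_nonneg fun f _ => mul_self_nonneg _

/-- The exponential of the dot-product kernel is positive semi-definite. -/
lemma exp_dotProduct_psd {n N : ℕ} (u : Fin N → Fin n → ℝ) (c : Fin N → ℝ) :
    0 ≤ ∑ i, ∑ j, c i * c j * Real.exp (u i ⬝ᵥ u j) := by
  have hexp : ∀ t : ℝ, Real.exp t = ∑' m : ℕ, t ^ m / (Nat.factorial m : ℝ) := by
    intro t
    rw [Real.exp_eq_exp_ℝ, NormedSpace.exp_eq_tsum_div]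
  have hsum : ∀ (a : ℝ) (i j : Fin N),
      Summable (fun m : ℕ => a * ((u i ⬝ᵥ u j) ^ m / (Nat.factorial m : ℝ))) := fun a i j =>
    (Real.summable_pow_div_factorial _).mul_left _
  calc (0:ℝ) ≤ ∑' m : ℕ, ∑ i, ∑ j, c i * c j * ((u i ⬝ᵥ u j) ^ m / (Nat.factorial m : ℝ)) := by
        refine tsum_nonneg fun m => ?_
        have : ∀ i j : Fin N, c i * c j * ((u i ⬝ᵥ u j) ^ m / (Nat.factorial m : ℝ))
            = c i * c j * (u i ⬝ᵥ u j) ^ m / (Nat.factorial m : ℝ) := fun i j => by ring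
        simp only [this, ← Finset.sum_div]
        exact div_nonneg (dotProduct_pow_psd u c) (by positivity)
    _ = ∑ i, ∑ j, ∑' m : ℕ, c i * c j * ((u i ⬝ᵥ u j) ^ m / (Nat.factorial m : ℝ)) := by
        rw [Summable.tsum_finsetSum fun i _ => ?_]
        · exact Finset.sum_congr rfl fun i _ => Summable.tsum_finsetSum fun j _ => hsum _ i j
        · exact summable_sum fun j _ => hsum _ i j
    _ = ∑ i, ∑ j, c i * c j * Real.exp (u i ⬝ᵥ u j) := by
        refine Finset.sum_congr rfl fun i _ => Finset.sum_congr rfl fun j _ => ?_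
        rw [tsum_mul_left, hexp]

/-- The anisotropic squared exponential kernel
`k x y = exp (−(x − y)ᵀ M (x − y) / l)` on `ℝⁿ`, with `M` symmetric positive definite
and `l > 0`, is a kernel. -/
theorem anisotropic_squared_exponential_isKernel {n : ℕ}
    (M : Matrix (Fin n) (Fin n) ℝ) (hM : M.PosDef) (l : ℝ) (hl : 0 < l) :
    IsKernel (fun x y : Fin n → ℝ =>
      Real.exp (-((x - y) ⬝ᵥ M.mulVec (x - y)) / l)) := by
  obtain ⟨B, hB⟩ : ∃ B : Matrix (Fin n) (Fin n) ℝ, M = Bᵀ * B := by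
    classical
    open scoped MatrixOrder in
    obtain ⟨X, hX, -, hMX⟩ := CFC.exists_sqrt_of_isSelfAdjoint_of_quasispectrumRestricts
      hM.posSemidef.isHermitian (QuasispectrumRestricts.nnreal_of_nonneg hM.posSemidef.nonneg)
    refine ⟨X, ?_⟩
    have hXt : Xᵀ = X := by rw [← Matrix.conjTranspose_eq_transpose_of_trivial]; exact hX.star_eq
    rw [hXt, hMX]
  have hdec : ∀ x y : Fin n → ℝ, x ⬝ᵥ M.mulVec y = (B.mulVec x) ⬝ᵥ (B.mulVec y) := by
    intro x y
    rw [hB]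
    rw [← Matrix.mulVec_mulVec, Matrix.dotProduct_mulVec]
    congr 1
    simp [Matrix.vecMul_transpose]
  constructor
  · intro x y
    have h : y - x = -(x - y) := by ring
    simp only [h, Matrix.mulVec_neg, neg_dotProduct, dotProduct_neg, neg_neg]
  · intro N x c
    set v : Fin N → Fin n → ℝ := fun i => B.mulVec (x i) with hv
    set w : Fin N → Fin n → ℝ := fun i => Real.sqrt (2 / l) • v i with hw
    have hww : ∀ i j, w i ⬝ᵥ w j = (2 / l) * (v i ⬝ᵥ v j) := by
      intro i j
      have h2 : Real.sqrt (2 / l) * Real.sqrt (2 / l) = 2 / l :=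
        Real.mul_self_sqrt (by positivity)
      rw [hw]
      simp only [smul_dotProduct, dotProduct_smul, smul_eq_mul, ← mul_assoc, h2]
    have hexpand : ∀ i j : Fin N,
        Real.exp (-((x i - x j) ⬝ᵥ M.mulVec (x i - x j)) / l) =
        Real.exp (-(v i ⬝ᵥ v i) / l) * Real.exp (-(v j ⬝ᵥ v j) / l) *
          Real.exp (w i ⬝ᵥ w j) := by
      intro i j
      rw [← Real.exp_add, ← Real.exp_add]
      congr 1
      rw [hww, hdec, Matrix.mulVec_sub]
      have : (v i - v j) ⬝ᵥ (v i - v j)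
          = v i ⬝ᵥ v i - 2 * (v i ⬝ᵥ v j) + v j ⬝ᵥ v j := by
        simp only [sub_dotProduct, dotProduct_sub]
        rw [dotProduct_comm (v j) (v i)]
        ring
      rw [this]
      field_simp
      ring
    have := exp_dotProduct_psd w (fun i => c i * Real.exp (-(v i ⬝ᵥ v i) / l))
    calc (0:ℝ) ≤ ∑ i, ∑ j, (c i * Real.exp (-(v i ⬝ᵥ v i) / l)) *
          (c j * Real.exp (-(v j ⬝ᵥ v j) / l)) * Real.exp (w i ⬝ᵥ w j) := this
      _ = ∑ i, ∑ j, c i * c j *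
          Real.exp (-((x i - x j) ⬝ᵥ M.mulVec (x i - x j)) / l) := by
          refine Finset.sum_congr rfl fun i _ => Finset.sum_congr rfl fun j _ => ?_
          rw [hexpand i j]
          ring
end

section
/- Let Σ : ℝⁿ → (symmetric positive definite n × n real matrices) and σ_s : ℝⁿ → ℝ be arbitrary functions. Define Q(x, y) = (x − y)ᵀ ((Σ(x) + Σ(y))/2)⁻¹ (x − y) and the nonstationary kernel k(x, y) = (σ_s(x) σ_s(y) / √det((Σ(x) + Σ(y))/2)) · exp(−Q(x, y)). Then k is a kernel on ℝⁿ: it is symmetric and positive semi-definite. -/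
open Finset Matrix

open MeasureTheory Real

variable {n : ℕ}

private lemma transpose_eq_of_posSemidef {A : Matrix (Fin n) (Fin n) ℝ} (hA : A.PosSemidef) :
    Aᵀ = A := by
  have := hA.isHermitian
  simpa [Matrix.IsHermitian, Matrix.conjTranspose_eq_transpose_of_trivial] using this

private lemma dot_symm {M : Matrix (Fin n) (Fin n) ℝ} (hM : Mᵀ = M) (v w : Fin n → ℝ) :
    v ⬝ᵥ M *ᵥ w = w ⬝ᵥ M *ᵥ v := by
  rw [dotProduct_mulVec, ← mulVec_transpose, hM, dotProduct_comm]

private lemma dot_mulVec_mulVec (M N : Matrix (Fin n) (Fin n) ℝ) (v w : Fin n → ℝ) :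
    (M *ᵥ v) ⬝ᵥ (N *ᵥ w) = v ⬝ᵥ (Mᵀ * N) *ᵥ w := by
  conv_rhs => rw [← mulVec_mulVec, dotProduct_mulVec, vecMul_transpose]

private lemma gauss_self_eq_norm :
    ((fun v : Fin n → ℝ => rexp (-(v ⬝ᵥ v))) ∘ (MeasurableEquiv.toLp 2 (Fin n → ℝ)).symm) =
      fun v : EuclideanSpace ℝ (Fin n) => rexp (-1 * ‖v‖ ^ 2) := by
  funext v
  have : ((MeasurableEquiv.toLp 2 (Fin n → ℝ)).symm v) ⬝ᵥ
      ((MeasurableEquiv.toLp 2 (Fin n → ℝ)).symm v) = ‖v‖ ^ 2 := by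
    simp only [MeasurableEquiv.coe_toLp_symm,
      EuclideanSpace.norm_eq, dotProduct, Real.norm_eq_abs, sq_abs]
    rw [Real.sq_sqrt (Finset.sum_nonneg fun i _ => by positivity)]
    exact Finset.sum_congr rfl fun i _ => (sq (v i)) ▸ rfl
  simp only [Function.comp_apply, this, neg_one_mul]

private lemma integrable_gauss_euclid :
    Integrable (fun v : EuclideanSpace ℝ (Fin n) => rexp (-1 * ‖v‖ ^ 2)) := by
  have h := (GaussianFourier.integrable_cexp_neg_mul_sq_norm_add (V := EuclideanSpace ℝ (Fin n))
    (b := 1) (by norm_num) 0 0).norm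
  refine h.congr ?_
  filter_upwards with v
  rw [Complex.norm_exp]
  norm_num [← Complex.ofReal_pow]

private lemma integrable_gauss_self :
    Integrable (fun v : Fin n → ℝ => rexp (-(v ⬝ᵥ v))) := by
  have hmp := EuclideanSpace.volume_preserving_symm_measurableEquiv_toLp (Fin n)
  rw [← hmp.integrable_comp_emb (MeasurableEquiv.measurableEmbedding _)]
  rw [gauss_self_eq_norm]
  exact integrable_gauss_euclid

private lemma integral_gauss_self :
    ∫ v : Fin n → ℝ, rexp (-(v ⬝ᵥ v)) = Real.sqrt (π ^ n) := by
  have hmp := EuclideanSpace.volume_preserving_symm_measurableEquiv_toLp (Fin n)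
  rw [← hmp.integral_comp (MeasurableEquiv.measurableEmbedding _)]
  have := congrFun (gauss_self_eq_norm (n := n))
  simp only [Function.comp_apply] at this
  calc ∫ v : EuclideanSpace ℝ (Fin n), rexp (-((MeasurableEquiv.toLp 2 (Fin n → ℝ)).symm v ⬝ᵥ
          (MeasurableEquiv.toLp 2 (Fin n → ℝ)).symm v))
      = ∫ v : EuclideanSpace ℝ (Fin n), rexp (-1 * ‖v‖ ^ 2) := by
        exact integral_congr_ae (Filter.Eventually.of_forall fun v => this v)
    _ = (π / 1) ^ ((Module.finrank ℝ (EuclideanSpace ℝ (Fin n))) / 2 : ℝ) :=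
        GaussianFourier.integral_rexp_neg_mul_sq_norm one_pos
    _ = Real.sqrt (π ^ n) := by
        rw [finrank_euclideanSpace, Fintype.card_fin, div_one,
          Real.sqrt_eq_rpow, ← Real.rpow_natCast π n, ← Real.rpow_mul pi_pos.le]
        ring_nf

open scoped MatrixOrder in
private lemma gauss_matrix {M : Matrix (Fin n) (Fin n) ℝ} (hM : M.PosDef) :
    Integrable (fun u : Fin n → ℝ => rexp (-(u ⬝ᵥ M *ᵥ u))) ∧
    ∫ u : Fin n → ℝ, rexp (-(u ⬝ᵥ M *ᵥ u)) = Real.sqrt (π ^ n / M.det) := by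
  classical
  set B := CFC.sqrt M with hBdef
  have hBB : B * B = M := CFC.sqrt_mul_sqrt_self M hM.posSemidef.nonneg
  have hBsd : B.PosSemidef := (CFC.sqrt_nonneg M).posSemidef
  have hBt : Bᵀ = B := transpose_eq_of_posSemidef hBsd
  have hdetM : 0 < M.det := hM.det_pos
  have hBdetnn : 0 ≤ B.det := by
    rw [hBsd.isHermitian.det_eq_prod_eigenvalues]
    exact Finset.prod_nonneg fun i _ => hBsd.eigenvalues_nonneg i
  have hBdet : Real.sqrt M.det = B.det := by
    rw [← hBB, det_mul, Real.sqrt_mul_self hBdetnn]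
  have hBdetpos : 0 < B.det := by
    rw [← hBdet]; exact Real.sqrt_pos.mpr hdetM
  -- the quadratic form as a norm
  have key : ∀ u : Fin n → ℝ, u ⬝ᵥ M *ᵥ u = (B *ᵥ u) ⬝ᵥ (B *ᵥ u) := by
    intro u
    rw [dot_mulVec_mulVec, hBt, hBB]
  -- change of variables
  have hmap : Measure.map (fun u : Fin n → ℝ => B *ᵥ u) volume
      = ENNReal.ofReal |B.det⁻¹| • volume := by
    have hfun : (fun u : Fin n → ℝ => B *ᵥ u) = ⇑(Matrix.toLin' B) := by
      funext u; simp [Matrix.toLin'_apply]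
    have hdet : LinearMap.det (Matrix.toLin' B) = B.det := LinearMap.det_toLin' B
    rw [hfun, Measure.map_linearMap_addHaar_pi_eq_smul_addHaar (by rw [hdet]; exact hBdetpos.ne'),
      hdet]
  set φ := fun u : Fin n → ℝ => B *ᵥ u with hφdef
  have hφcont : Continuous φ := by
    have : φ = ⇑(Matrix.toLin' B) := by funext u; simp [hφdef, Matrix.toLin'_apply]
    rw [this]
    exact LinearMap.continuous_of_finiteDimensional _
  have hgcont : Continuous (fun v : Fin n → ℝ => rexp (-(v ⬝ᵥ v))) := by
    apply Real.continuous_exp.comp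
    have : (fun v : Fin n → ℝ => v ⬝ᵥ v) = fun v => ∑ i, v i * v i := rfl
    exact (this ▸ continuous_finset_sum _ fun i _ =>
      (continuous_apply i).mul (continuous_apply i)).neg
  have hmapint : Integrable (fun v : Fin n → ℝ => rexp (-(v ⬝ᵥ v))) (Measure.map φ volume) := by
    rw [hmap]
    exact integrable_gauss_self.smul_measure ENNReal.ofReal_ne_top
  have hcomp : (fun u : Fin n → ℝ => rexp (-(u ⬝ᵥ M *ᵥ u)))
      = (fun v : Fin n → ℝ => rexp (-(v ⬝ᵥ v))) ∘ φ := by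
    funext u; simp only [Function.comp_apply, hφdef, key u]
  constructor
  · rw [hcomp]
    exact (integrable_map_measure hgcont.aestronglyMeasurable hφcont.aemeasurable).mp hmapint
  · have h1 : ∫ u, rexp (-(u ⬝ᵥ M *ᵥ u)) = ∫ u, rexp (-(φ u ⬝ᵥ φ u)) := by
      refine integral_congr_ae (Filter.Eventually.of_forall fun u => ?_)
      dsimp only
      rw [key u]
    rw [h1, ← integral_map hφcont.aemeasurable hgcont.aestronglyMeasurable, hmap,
      integral_smul_measure, integral_gauss_self]
    rw [ENNReal.toReal_ofReal (abs_nonneg _), abs_of_pos (inv_pos.mpr hBdetpos), smul_eq_mul,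
      Real.sqrt_div (by positivity : (0:ℝ) ≤ π ^ n), hBdet]
    ring

private lemma gauss_prod {A B : Matrix (Fin n) (Fin n) ℝ} (hA : A.PosDef) (hB : B.PosDef)
    (x y : Fin n → ℝ) :
    Integrable (fun u : Fin n → ℝ =>
      rexp (-((u - x) ⬝ᵥ A *ᵥ (u - x))) * rexp (-((u - y) ⬝ᵥ B *ᵥ (u - y)))) ∧
    ∫ u : Fin n → ℝ, rexp (-((u - x) ⬝ᵥ A *ᵥ (u - x))) * rexp (-((u - y) ⬝ᵥ B *ᵥ (u - y)))
      = Real.sqrt (π ^ n / (A + B).det) *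
        rexp (-((x - y) ⬝ᵥ (A⁻¹ + B⁻¹)⁻¹ *ᵥ (x - y))) := by
  classical
  have hAB : (A + B).PosDef := hA.add hB
  have hAt : Aᵀ = A := transpose_eq_of_posSemidef hA.posSemidef
  have hBt : Bᵀ = B := transpose_eq_of_posSemidef hB.posSemidef
  have hABt : (A + B)ᵀ = A + B := transpose_eq_of_posSemidef hAB.posSemidef
  have hAdet : IsUnit A.det := isUnit_iff_ne_zero.mpr hA.det_pos.ne'
  have hBdet : IsUnit B.det := isUnit_iff_ne_zero.mpr hB.det_pos.ne'
  have hABdet : IsUnit (A + B).det := isUnit_iff_ne_zero.mpr hAB.det_pos.ne'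
  set S := (A + B)⁻¹ with hSdef
  have hSt : Sᵀ = S := by rw [hSdef, transpose_nonsing_inv, hABt]
  have hSmul : (A + B) * S = 1 := mul_nonsing_inv _ hABdet
  have hSmul' : S * (A + B) = 1 := nonsing_inv_mul _ hABdet
  set C := (A⁻¹ + B⁻¹)⁻¹ with hCdef
  have hinv1 : A⁻¹ + B⁻¹ = B⁻¹ * (A + B) * A⁻¹ := by
    rw [mul_add, add_mul, mul_assoc, mul_nonsing_inv _ hAdet, mul_one,
      nonsing_inv_mul _ hBdet, one_mul]
    exact add_comm _ _
  have hinv2 : A⁻¹ + B⁻¹ = A⁻¹ * (A + B) * B⁻¹ := by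
    rw [mul_add, add_mul, nonsing_inv_mul _ hAdet, one_mul, mul_assoc,
      mul_nonsing_inv _ hBdet, mul_one]
    exact add_comm _ _
  have hC1 : C = A * S * B := by
    rw [hCdef, hinv1, Matrix.mul_inv_rev, Matrix.mul_inv_rev,
      nonsing_inv_nonsing_inv _ hAdet, nonsing_inv_nonsing_inv _ hBdet, ← hSdef, ← mul_assoc]
  have hC2 : C = B * S * A := by
    rw [hCdef, hinv2, Matrix.mul_inv_rev, Matrix.mul_inv_rev,
      nonsing_inv_nonsing_inv _ hAdet, nonsing_inv_nonsing_inv _ hBdet, ← hSdef, ← mul_assoc]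
  have hCt : Cᵀ = C := by
    rw [hC1, transpose_mul, transpose_mul, hSt, hAt, hBt, ← mul_assoc, ← hC2]
    exact hC1
  set m := S *ᵥ (A *ᵥ x + B *ᵥ y) with hmdef
  have hm : (A + B) *ᵥ m = A *ᵥ x + B *ᵥ y := by
    rw [hmdef, mulVec_mulVec, hSmul, one_mulVec]
  have expand : ∀ (M : Matrix (Fin n) (Fin n) ℝ), Mᵀ = M → ∀ v w : Fin n → ℝ,
      (v - w) ⬝ᵥ M *ᵥ (v - w)
        = v ⬝ᵥ M *ᵥ v - 2 * (v ⬝ᵥ M *ᵥ w) + w ⬝ᵥ M *ᵥ w := by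
    intro M hMt v w
    rw [Matrix.mulVec_sub, sub_dotProduct, dotProduct_sub, dotProduct_sub, dot_symm hMt w v]
    ring
  have core : m ⬝ᵥ (A + B) *ᵥ m + (x - y) ⬝ᵥ C *ᵥ (x - y)
      = x ⬝ᵥ A *ᵥ x + y ⬝ᵥ B *ᵥ y := by
    have e1 : m ⬝ᵥ (A + B) *ᵥ m = x ⬝ᵥ (A * S * A) *ᵥ x + x ⬝ᵥ (A * S * B) *ᵥ y
        + (y ⬝ᵥ (B * S * A) *ᵥ x + y ⬝ᵥ (B * S * B) *ᵥ y) := by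
      rw [hm, hmdef]
      rw [Matrix.mulVec_add, add_dotProduct, dotProduct_add, dotProduct_add,
        mulVec_mulVec, mulVec_mulVec, dot_mulVec_mulVec, dot_mulVec_mulVec,
        dot_mulVec_mulVec, dot_mulVec_mulVec, transpose_mul, transpose_mul, hSt, hAt, hBt]
    have e2 : (x - y) ⬝ᵥ C *ᵥ (x - y)
        = x ⬝ᵥ C *ᵥ x - x ⬝ᵥ C *ᵥ y - y ⬝ᵥ C *ᵥ x + y ⬝ᵥ C *ᵥ y := by
      rw [Matrix.mulVec_sub, sub_dotProduct, dotProduct_sub, dotProduct_sub]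
      ring
    have eA : A * S * A + C = A := by
      rw [hC1, ← mul_add, mul_assoc, hSmul', mul_one]
    have eB : B * S * B + C = B := by
      rw [hC2, ← mul_add, add_comm B A, mul_assoc, hSmul', mul_one]
    have fx : x ⬝ᵥ (A * S * A) *ᵥ x + x ⬝ᵥ C *ᵥ x = x ⬝ᵥ A *ᵥ x := by
      conv_rhs => rw [← eA]
      rw [add_mulVec, dotProduct_add]
    have fy : y ⬝ᵥ (B * S * B) *ᵥ y + y ⬝ᵥ C *ᵥ y = y ⬝ᵥ B *ᵥ y := by
      conv_rhs => rw [← eB]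
      rw [add_mulVec, dotProduct_add]
    have fxy : x ⬝ᵥ (A * S * B) *ᵥ y = x ⬝ᵥ C *ᵥ y := by rw [hC1]
    have fyx : y ⬝ᵥ (B * S * A) *ᵥ x = y ⬝ᵥ C *ᵥ x := by rw [hC2]
    rw [e1, e2]
    linarith [fx, fy, fxy, fyx]
  have key : ∀ u : Fin n → ℝ, (u - x) ⬝ᵥ A *ᵥ (u - x) + (u - y) ⬝ᵥ B *ᵥ (u - y)
      = (u - m) ⬝ᵥ (A + B) *ᵥ (u - m) + (x - y) ⬝ᵥ C *ᵥ (x - y) := by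
    intro u
    rw [expand A hAt, expand B hBt, expand (A + B) hABt]
    have h2 : u ⬝ᵥ (A + B) *ᵥ u = u ⬝ᵥ A *ᵥ u + u ⬝ᵥ B *ᵥ u := by
      rw [add_mulVec, dotProduct_add]
    have h3 : u ⬝ᵥ (A + B) *ᵥ m = u ⬝ᵥ A *ᵥ x + u ⬝ᵥ B *ᵥ y := by
      rw [hm, dotProduct_add]
    linarith [core, h2, h3]
  have hfun : ∀ u : Fin n → ℝ,
      rexp (-((u - x) ⬝ᵥ A *ᵥ (u - x))) * rexp (-((u - y) ⬝ᵥ B *ᵥ (u - y)))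
        = rexp (-((x - y) ⬝ᵥ C *ᵥ (x - y)))
          * rexp (-((u - m) ⬝ᵥ (A + B) *ᵥ (u - m))) := by
    intro u
    rw [← Real.exp_add, ← Real.exp_add]
    congr 1
    have := key u
    linarith [key u]
  obtain ⟨hint0, hval0⟩ := gauss_matrix hAB
  have hintshift : Integrable
      (fun u : Fin n → ℝ => rexp (-((u - m) ⬝ᵥ (A + B) *ᵥ (u - m)))) := by
    simpa using hint0.comp_sub_right m
  constructor
  · refine ((hintshift.const_mul (rexp (-((x - y) ⬝ᵥ C *ᵥ (x - y))))).congr ?_)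
    filter_upwards with u
    exact (hfun u).symm
  · calc ∫ u : Fin n → ℝ, rexp (-((u - x) ⬝ᵥ A *ᵥ (u - x))) * rexp (-((u - y) ⬝ᵥ B *ᵥ (u - y)))
        = ∫ u : Fin n → ℝ, rexp (-((x - y) ⬝ᵥ C *ᵥ (x - y)))
            * rexp (-((u - m) ⬝ᵥ (A + B) *ᵥ (u - m))) :=
          integral_congr_ae (Filter.Eventually.of_forall hfun)
      _ = rexp (-((x - y) ⬝ᵥ C *ᵥ (x - y)))
            * ∫ u : Fin n → ℝ, rexp (-((u - m) ⬝ᵥ (A + B) *ᵥ (u - m))) :=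
          integral_const_mul _ _
      _ = rexp (-((x - y) ⬝ᵥ C *ᵥ (x - y)))
            * ∫ u : Fin n → ℝ, rexp (-(u ⬝ᵥ (A + B) *ᵥ u)) := by
          rw [integral_sub_right_eq_self (fun u : Fin n → ℝ => rexp (-(u ⬝ᵥ (A + B) *ᵥ u))) m]
      _ = Real.sqrt (π ^ n / (A + B).det) * rexp (-((x - y) ⬝ᵥ (A⁻¹ + B⁻¹)⁻¹ *ᵥ (x - y))) := by
          rw [hval0, ← hCdef]
          ring

private lemma posDef_smul {M : Matrix (Fin n) (Fin n) ℝ} (hM : M.PosDef) {c : ℝ} (hc : 0 < c) :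
    (c • M).PosDef := by
  refine ⟨?_, fun v hv => ?_⟩
  · have h := hM.isHermitian
    rw [Matrix.IsHermitian, conjTranspose_smul] at *
    rw [h, star_trivial]
  · have h2 := smul_pos hc (hM.2 hv)
    simp only [smul_eq_mul, Finsupp.mul_sum, star_trivial] at h2 ⊢
    refine lt_of_lt_of_eq h2 (Finsupp.sum_congr fun i _ => Finsupp.sum_congr fun j _ => ?_)
    rw [Matrix.smul_apply, smul_eq_mul]; ring

private lemma inv_smul_mat {M : Matrix (Fin n) (Fin n) ℝ} (hdet : IsUnit M.det) {c : ℝ}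
    (hc : c ≠ 0) : (c • M)⁻¹ = c⁻¹ • M⁻¹ := by
  apply Matrix.inv_eq_right_inv
  rw [smul_mul_smul_comm, mul_nonsing_inv _ hdet, mul_inv_cancel₀ hc, one_smul]

/-- The squared-exponential instance of the Paciorek–Risser nonstationary kernel:
`k x y = (σ x σ y / √det((Σ x + Σ y)/2)) exp (−Q x y)` with
`Q x y = (x − y)ᵀ ((Σ x + Σ y)/2)⁻¹ (x − y)`, where `Σ` maps each point to a
symmetric positive definite matrix and `σ` is arbitrary, is a kernel on `ℝⁿ`. -/
theorem paciorek_nonstationary_isKernel {n : ℕ}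
    (Sig : (Fin n → ℝ) → Matrix (Fin n) (Fin n) ℝ)
    (hSig : ∀ x, (Sig x).PosDef) (σs : (Fin n → ℝ) → ℝ) :
    IsKernel (fun x y : Fin n → ℝ =>
      σs x * σs y / Real.sqrt (((2 : ℝ)⁻¹ • (Sig x + Sig y)).det) *
        Real.exp (-((x - y) ⬝ᵥ ((2 : ℝ)⁻¹ • (Sig x + Sig y))⁻¹.mulVec (x - y)))) := by
  classical
  constructor
  · intro x y
    dsimp only
    have hq : (x - y) ⬝ᵥ ((2 : ℝ)⁻¹ • (Sig x + Sig y))⁻¹ *ᵥ (x - y)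
        = (y - x) ⬝ᵥ ((2 : ℝ)⁻¹ • (Sig y + Sig x))⁻¹ *ᵥ (y - x) := by
      rw [add_comm (Sig y), ← neg_sub x y, Matrix.mulVec_neg, dotProduct_neg,
        neg_dotProduct, neg_neg]
    rw [hq, add_comm (Sig x), mul_comm (σs x)]
  · intro N pts c
    dsimp only
    set A : Fin N → Matrix (Fin n) (Fin n) ℝ := fun i => (2 : ℝ) • (Sig (pts i))⁻¹ with hAdef
    have hA : ∀ i, (A i).PosDef := fun i => posDef_smul (hSig (pts i)).inv two_pos
    have hAinv : ∀ i, (A i)⁻¹ = (2 : ℝ)⁻¹ • Sig (pts i) := by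
      intro i
      rw [hAdef]
      dsimp only
      rw [inv_smul_mat (isUnit_iff_ne_zero.mpr (hSig (pts i)).inv.det_pos.ne') two_ne_zero,
        nonsing_inv_nonsing_inv _ (isUnit_iff_ne_zero.mpr (hSig (pts i)).det_pos.ne')]
    have hAsum : ∀ i j, (A i)⁻¹ + (A j)⁻¹ = (2 : ℝ)⁻¹ • (Sig (pts i) + Sig (pts j)) := by
      intro i j
      rw [hAinv i, hAinv j, smul_add]
    have hM : ∀ i j, ((2 : ℝ)⁻¹ • (Sig (pts i) + Sig (pts j))).PosDef := fun i j =>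
      posDef_smul ((hSig (pts i)).add (hSig (pts j))) (by norm_num)
    have hdetsum : ∀ i j, (A i + A j).det
        = (A i).det * ((2 : ℝ)⁻¹ • (Sig (pts i) + Sig (pts j))).det * (A j).det := by
      intro i j
      have hAi := isUnit_iff_ne_zero.mpr (hA i).det_pos.ne'
      have hAj := isUnit_iff_ne_zero.mpr (hA j).det_pos.ne'
      have : A i + A j = A i * ((A i)⁻¹ + (A j)⁻¹) * A j := by
        rw [mul_add, add_mul, mul_nonsing_inv _ hAi, one_mul, mul_assoc,
          nonsing_inv_mul _ hAj, mul_one, add_comm]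
      rw [this, hAsum i j, det_mul, det_mul]
    set d : Fin N → ℝ :=
      fun i => c i * σs (pts i) * Real.sqrt ((A i).det / Real.sqrt (π ^ n)) with hddef
    set f : Fin N → (Fin n → ℝ) → ℝ :=
      fun i u => d i * rexp (-((u - pts i) ⬝ᵥ (A i) *ᵥ (u - pts i))) with hfdef
    have hpair : ∀ i j,
        c i * c j * (σs (pts i) * σs (pts j)
            / Real.sqrt (((2 : ℝ)⁻¹ • (Sig (pts i) + Sig (pts j))).det) *
          Real.exp (-((pts i - pts j) ⬝ᵥ
            ((2 : ℝ)⁻¹ • (Sig (pts i) + Sig (pts j)))⁻¹ *ᵥ (pts i - pts j))))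
        = ∫ u : Fin n → ℝ, f i u * f j u := by
      intro i j
      obtain ⟨hint, hval⟩ := gauss_prod (hA i) (hA j) (pts i) (pts j)
      have hfeq : (fun u : Fin n → ℝ => f i u * f j u) = fun u =>
          (d i * d j) * (rexp (-((u - pts i) ⬝ᵥ (A i) *ᵥ (u - pts i)))
            * rexp (-((u - pts j) ⬝ᵥ (A j) *ᵥ (u - pts j)))) := by
        funext u; rw [hfdef]; ring
      rw [hfeq]
      rw [integral_const_mul, hval, hAsum i j]
      -- coefficient identity
      set dM := ((2 : ℝ)⁻¹ • (Sig (pts i) + Sig (pts j))).det with hdMdef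
      have hdMpos : 0 < dM := (hM i j).det_pos
      have hdAi : 0 < (A i).det := (hA i).det_pos
      have hdAj : 0 < (A j).det := (hA j).det_pos
      rw [hdetsum i j, ← hdMdef, hddef]
      have hππ : Real.sqrt (π ^ n) * Real.sqrt (π ^ n) = π ^ n :=
        Real.mul_self_sqrt (by positivity)
      have hsπ : 0 < Real.sqrt (π ^ n) := Real.sqrt_pos.mpr (by positivity)
      have hrad : (A i).det / Real.sqrt (π ^ n) * ((A j).det / Real.sqrt (π ^ n)
          * (π ^ n / ((A i).det * dM * (A j).det))) = 1 / dM := by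
        field_simp
        linear_combination (-1 : ℝ) * hππ
      have hcomb : Real.sqrt ((A i).det / Real.sqrt (π ^ n))
            * Real.sqrt ((A j).det / Real.sqrt (π ^ n))
            * Real.sqrt (π ^ n / ((A i).det * dM * (A j).det))
          = 1 / Real.sqrt dM := by
        rw [← Real.sqrt_mul (by positivity), ← Real.sqrt_mul (by positivity), mul_assoc,
          hrad, one_div, Real.sqrt_inv, one_div]
      calc c i * c j * (σs (pts i) * σs (pts j) / Real.sqrt dM *
              rexp (-((pts i - pts j) ⬝ᵥ ((2 : ℝ)⁻¹ • (Sig (pts i) + Sig (pts j)))⁻¹ *ᵥ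
                (pts i - pts j))))
          = c i * c j * σs (pts i) * σs (pts j) *
              (Real.sqrt ((A i).det / Real.sqrt (π ^ n))
                * Real.sqrt ((A j).det / Real.sqrt (π ^ n))
                * Real.sqrt (π ^ n / ((A i).det * dM * (A j).det))) *
              rexp (-((pts i - pts j) ⬝ᵥ ((2 : ℝ)⁻¹ • (Sig (pts i) + Sig (pts j)))⁻¹ *ᵥ
                (pts i - pts j))) := by
            rw [hcomb]; ring
        _ = c i * σs (pts i) * Real.sqrt ((A i).det / Real.sqrt (π ^ n))
              * (c j * σs (pts j) * Real.sqrt ((A j).det / Real.sqrt (π ^ n)))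
              * (Real.sqrt (π ^ n / ((A i).det * dM * (A j).det)) *
              rexp (-((pts i - pts j) ⬝ᵥ ((2 : ℝ)⁻¹ • (Sig (pts i) + Sig (pts j)))⁻¹ *ᵥ
                (pts i - pts j)))) := by ring
    have hintpair : ∀ i j, Integrable (fun u : Fin n → ℝ => f i u * f j u) := by
      intro i j
      obtain ⟨hint, _⟩ := gauss_prod (hA i) (hA j) (pts i) (pts j)
      have := (hint.const_mul (d i * d j))
      refine this.congr ?_
      filter_upwards with u
      rw [hfdef]; ring
    calc ∑ i, ∑ j, c i * c j *
          (σs (pts i) * σs (pts j)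
              / Real.sqrt (((2 : ℝ)⁻¹ • (Sig (pts i) + Sig (pts j))).det) *
            Real.exp (-((pts i - pts j) ⬝ᵥ
              ((2 : ℝ)⁻¹ • (Sig (pts i) + Sig (pts j)))⁻¹ *ᵥ (pts i - pts j))))
        = ∑ i, ∑ j, ∫ u : Fin n → ℝ, f i u * f j u :=
          Finset.sum_congr rfl fun i _ => Finset.sum_congr rfl fun j _ => hpair i j
      _ = ∑ i, ∫ u : Fin n → ℝ, ∑ j, f i u * f j u :=
          Finset.sum_congr rfl fun i _ =>
            (integral_finset_sum _ fun j _ => hintpair i j).symm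
      _ = ∫ u : Fin n → ℝ, ∑ i, ∑ j, f i u * f j u :=
          (integral_finset_sum _ fun i _ =>
            integrable_finset_sum _ fun j _ => hintpair i j).symm
      _ = ∫ u : Fin n → ℝ, (∑ i, f i u) ^ 2 := by
          refine integral_congr_ae (Filter.Eventually.of_forall fun u => ?_)
          dsimp only
          rw [sq, Finset.sum_mul_sum]
      _ ≥ 0 := integral_nonneg fun u => sq_nonneg _
end
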